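/- arXiv:2605.21911 — 6 statements merged into one kernel-verified Lean document; each statement's English description precedes it below -/
import Mathlib

section
/- Let θ, ω ≥ 0, λ ∈ ℝ with 2ω ≠ λ, g₀ > 0, and T > 0. Define D(t) = (2θg₀ + 2ω − λ)e^{(2ω−λ)t} − 2θg₀ and assume D(t) ≠ 0 for all t ∈ [0,T]. Define g(t) = g₀(2ω − λ)/D(t) and f(t) = θ g(t) + ω. Then g(0) = g₀, and for every t ∈ [0,T], g′(t) = −(2f(t) − λ)·g(t) = −(2θ g(t) + 2ω − λ)·g(t). -/
/-- Closed-form affine-coupled schedule (case `2ω ≠ λ`): with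
`D t = (2θg₀ + 2ω - λ) e^{(2ω-λ)t} - 2θg₀` nonvanishing on `[0,T]`,
`g t = g₀ (2ω - λ) / D t` and `f t = θ g t + ω`, one has `g 0 = g₀` and
`g' t = -(2 f t - λ) g t = -(2θ g t + 2ω - λ) g t` on `[0,T]`. -/
theorem stmt1 (θ ω lam g₀ T : ℝ) (hθ : 0 ≤ θ) (hω : 0 ≤ ω) (hne : 2 * ω ≠ lam)
    (hg₀ : 0 < g₀) (hT : 0 < T)
    (D g f : ℝ → ℝ)
    (hD : ∀ t, D t = (2 * θ * g₀ + 2 * ω - lam) * Real.exp ((2 * ω - lam) * t) - 2 * θ * g₀)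
    (hDne : ∀ t ∈ Set.Icc (0:ℝ) T, D t ≠ 0)
    (hg : ∀ t, g t = g₀ * (2 * ω - lam) / D t)
    (hf : ∀ t, f t = θ * g t + ω) :
    g 0 = g₀ ∧ ∀ t ∈ Set.Icc (0:ℝ) T,
      HasDerivAt g (-(2 * f t - lam) * g t) t ∧
        -(2 * f t - lam) * g t = -(2 * θ * g t + 2 * ω - lam) * g t := by
  have hb : 2 * ω - lam ≠ 0 := sub_ne_zero.mpr hne
  constructor
  · rw [hg, hD]
    simp only [mul_zero, Real.exp_zero, mul_one]
    rw [show (2 * θ * g₀ + 2 * ω - lam) - 2 * θ * g₀ = 2 * ω - lam by ring]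
    field_simp
  · intro t ht
    have hDt := hDne t ht
    have hgfun : g = fun s => g₀ * (2 * ω - lam) / D s := funext hg
    have hDfun : D = fun s => (2 * θ * g₀ + 2 * ω - lam) * Real.exp ((2 * ω - lam) * s)
        - 2 * θ * g₀ := funext hD
    have hE : HasDerivAt (fun s : ℝ => Real.exp ((2 * ω - lam) * s))
        (Real.exp ((2 * ω - lam) * t) * (2 * ω - lam)) t := by
      simpa using ((hasDerivAt_id t).const_mul (2 * ω - lam)).exp
    have hDd : HasDerivAt D
        ((2 * θ * g₀ + 2 * ω - lam) * (Real.exp ((2 * ω - lam) * t) * (2 * ω - lam))) t := by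
      rw [hDfun]; exact (hE.const_mul _).sub_const _
    have hgd := (hasDerivAt_const t (g₀ * (2 * ω - lam))).div hDd hDt
    have key : (0 * D t - g₀ * (2 * ω - lam) *
        ((2 * θ * g₀ + 2 * ω - lam) * (Real.exp ((2 * ω - lam) * t) * (2 * ω - lam)))) / D t ^ 2
        = -(2 * f t - lam) * g t := by
      have hDt' : (2 * θ * g₀ + 2 * ω - lam) * Real.exp ((2 * ω - lam) * t)
          - 2 * θ * g₀ ≠ 0 := by rw [← hD]; exact hDt
      rw [hf t, hg t]
      field_simp
      rw [hD t]
      ring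
    rw [key] at hgd
    refine ⟨hgd.congr_of_eventuallyEq (Filter.Eventually.of_forall fun s => hg s), ?_⟩
    rw [hf t]
    ring
end

section
/- Let E > 0, θ > 0, ω ∈ [0, E), and c ≥ 2E. Set g₀ = ((2ω − c)/(2θ)) · (e^{2(E−ω)} − 1)/(1 − e^{−(2ω−c)}), and define g(t) = g₀(2ω − c)/((2θ g₀ + 2ω − c)e^{(2ω−c)t} − 2θ g₀) and f(t) = θ g(t) + ω for t ∈ [0,1]. Then: (i) g₀ > 0; (ii) g(t) > 0 for all t ∈ [0,1]; (iii) g′(t) ≥ 0 for all t ∈ [0,1]; and (iv) ∫₀¹ f(t) dt = E. -/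
open MeasureTheory

/-- ACS hyperparameter constraints: for `E > 0`, `θ > 0`, `ω ∈ [0, E)`, `c ≥ 2E`, and the
prescribed `g₀`, the closed-form schedule `g` is positive and nondecreasing on `[0,1]`,
and the coupled `f = θ g + ω` has terminal energy `∫₀¹ f = E`. -/
theorem stmt3 (E θ ω c : ℝ) (hE : 0 < E) (hθ : 0 < θ) (hω : 0 ≤ ω) (hωE : ω < E)
    (hc : 2 * E ≤ c)
    (g₀ : ℝ)
    (hg₀def : g₀ = ((2 * ω - c) / (2 * θ)) *
      (Real.exp (2 * (E - ω)) - 1) / (1 - Real.exp (-(2 * ω - c))))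
    (g f : ℝ → ℝ)
    (hg : ∀ t, g t = g₀ * (2 * ω - c) /
      ((2 * θ * g₀ + 2 * ω - c) * Real.exp ((2 * ω - c) * t) - 2 * θ * g₀))
    (hf : ∀ t, f t = θ * g t + ω) :
    0 < g₀ ∧
    (∀ t ∈ Set.Icc (0:ℝ) 1, 0 < g t) ∧
    (∀ t ∈ Set.Icc (0:ℝ) 1, 0 ≤ deriv g t) ∧
    (∫ t in (0:ℝ)..1, f t) = E := by
  have ha : 2 * ω - c < 0 := by linarith
  set a : ℝ := 2 * ω - c with haa
  set K : ℝ := 2 * θ * g₀ with hKdef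
  set u : ℝ := Real.exp (2 * (E - ω)) with hu
  set v : ℝ := Real.exp (-a) with hv
  have hu1 : 1 < u := by
    rw [hu]; exact Real.one_lt_exp_iff.mpr (by linarith)
  have hv1 : 1 < v := by
    rw [hv]; exact Real.one_lt_exp_iff.mpr (by simp only [haa]; linarith)
  have hvu : u ≤ v := by
    rw [hu, hv]; exact Real.exp_le_exp.mpr (by simp only [haa]; linarith)
  -- positivity of g₀
  have hg₀pos : 0 < g₀ := by
    rw [hg₀def]
    have h1 : a / (2 * θ) * (u - 1) < 0 :=
      mul_neg_of_neg_of_pos (div_neg_of_neg_of_pos ha (by linarith)) (by linarith)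
    exact div_pos_of_neg_of_neg h1 (by linarith)
  have hKpos : 0 < K := by rw [hKdef]; positivity
  have hKid : K * (1 - v) = a * (u - 1) := by
    have h1v : (1:ℝ) - v ≠ 0 := by linarith
    rw [hKdef, hg₀def]
    field_simp
  have hKa : K + a ≤ 0 := by
    have h2 : 0 ≤ (-a) * (v - u) := mul_nonneg (by linarith) (by linarith)
    by_contra h
    push_neg at h
    nlinarith [mul_pos h (show (0:ℝ) < v - 1 by linarith)]
  -- the denominator
  have hDneg : ∀ t : ℝ, (K + a) * Real.exp (a * t) - K < 0 := by
    intro t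
    have h1 : (K + a) * Real.exp (a * t) ≤ 0 :=
      mul_nonpos_of_nonpos_of_nonneg hKa (Real.exp_pos _).le
    linarith
  have hg' : ∀ t : ℝ, g t = g₀ * a / ((K + a) * Real.exp (a * t) - K) := by
    intro t
    rw [hg t]
    rw [show 2 * θ * g₀ + 2 * ω - c = K + a by rw [hKdef, haa]; ring]
  have hgpos : ∀ t : ℝ, 0 < g t := by
    intro t
    rw [hg' t]
    exact div_pos_of_neg_of_neg (mul_neg_of_pos_of_neg hg₀pos ha) (hDneg t)
  have hgfun : g = fun t => g₀ * a / ((K + a) * Real.exp (a * t) - K) := funext hg'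
  -- derivative of the denominator
  have hD : ∀ t : ℝ, HasDerivAt (fun t => (K + a) * Real.exp (a * t) - K)
      ((K + a) * (Real.exp (a * t) * a)) t := by
    intro t
    simpa using ((((hasDerivAt_id t).const_mul a).exp).const_mul (K + a)).sub_const K
  -- monotonicity
  have hderiv : ∀ t : ℝ, 0 ≤ deriv g t := by
    intro t
    have hgd : HasDerivAt g
        ((0 * ((K + a) * Real.exp (a * t) - K) -
          g₀ * a * ((K + a) * (Real.exp (a * t) * a))) /
          ((K + a) * Real.exp (a * t) - K) ^ 2) t := by
      rw [hgfun]
      exact (hasDerivAt_const t (g₀ * a)).div (hD t) (hDneg t).ne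
    rw [hgd.deriv]
    apply div_nonneg _ (sq_nonneg _)
    nlinarith [mul_nonneg (mul_nonneg (mul_nonneg hg₀pos.le (sq_nonneg a))
      (Real.exp_pos (a * t)).le) (neg_nonneg.mpr hKa)]
  -- the integral
  have hvw : v * Real.exp a = 1 := by rw [hv, ← Real.exp_add]; simp
  have hF : ∀ t ∈ Set.uIcc (0:ℝ) 1, HasDerivAt
      (fun t => (1/2) * Real.log (-((K + a) * Real.exp (a * t) - K)) + (c/2) * t)
      (f t) t := by
    intro t _
    have h1 : HasDerivAt (fun t => (1/2) * Real.log (-((K + a) * Real.exp (a * t) - K)) + (c/2) * t)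
        ((1/2) * (-((K + a) * (Real.exp (a * t) * a)) / -((K + a) * Real.exp (a * t) - K))
          + c/2) t := by
      have h2 := (((hD t).neg).log (ne_of_gt (neg_pos.mpr (hDneg t)))).const_mul (1/2 : ℝ)
      have h3 : HasDerivAt (fun t : ℝ => (c/2) * t) (c/2) t := by
        simpa using (hasDerivAt_id t).const_mul (c/2)
      exact h2.add h3
    convert h1 using 1
    rw [hf t, hg' t, neg_div_neg_eq]
    have hDne : (K + a) * Real.exp (a * t) - K ≠ 0 := (hDneg t).ne
    field_simp [hDne]
    rw [haa, hKdef]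
    ring
  have hfc : Continuous f := by
    have : f = fun t => θ * (g₀ * a / ((K + a) * Real.exp (a * t) - K)) + ω := by
      funext t; rw [hf t, hg' t]
    rw [this]
    apply Continuous.add _ continuous_const
    apply Continuous.mul continuous_const
    have hDcont : Continuous fun t : ℝ => (K + a) * Real.exp (a * t) - K :=
      (continuous_const.mul (Real.continuous_exp.comp
        (continuous_const.mul continuous_id))).sub continuous_const
    exact continuous_const.div hDcont (fun t => (hDneg t).ne)
  have hint := intervalIntegral.integral_eq_sub_of_hasDerivAt hF
    (hfc.intervalIntegrable 0 1)
  -- evaluate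
  have hD1 : (K + a) * Real.exp (a * 1) - K = a * u * Real.exp a := by
    rw [mul_one]
    linear_combination Real.exp a * hKid + (K + a * u + (c - 2 * ω) * u) * hvw
  have hD0 : (K + a) * Real.exp (a * 0) - K = a := by
    simp
  refine ⟨hg₀pos, fun t _ => hgpos t, fun t _ => hderiv t, ?_⟩
  rw [hint, hD1, hD0]
  have hlog : Real.log (-(a * u * Real.exp a)) = Real.log (-a) + (2 * (E - ω)) + a := by
    rw [show -(a * u * Real.exp a) = (-a) * u * Real.exp a by ring,
      Real.log_mul (ne_of_gt (mul_pos (show (0:ℝ) < -a by linarith)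
        (show (0:ℝ) < u by linarith))) (Real.exp_ne_zero a),
      Real.log_mul (ne_of_gt (show (0:ℝ) < -a by linarith))
        (ne_of_gt (show (0:ℝ) < u by linarith)), hu, Real.log_exp, Real.log_exp]
  rw [hlog]
  ring_nf
  linarith [haa]
end

section
/- Let d > 0 and T > 0, and let J, g : [0,T] → ℝ be continuously differentiable with J(t) ≥ 0 and g(t) > 0 for all t ∈ [0,T]. Suppose that for all t ∈ [0,T], (1/d)·(g(t)J(t))² ≤ g(t)²J(t) − g(t)J′(t). Then ∫₀ᵀ (g(t)J(t))² dt ≤ d·g(0)J(0) + d·∫₀ᵀ J(t)(g(t)² + g′(t)) dt. -/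
open MeasureTheory

/-- Master integration-by-parts bound: if `(1/d)(gJ)² ≤ g²J - gJ'` pointwise on `[0,T]`
with `J ≥ 0`, `g > 0` and `J, g` continuously differentiable, then
`∫₀ᵀ (gJ)² ≤ d g(0) J(0) + d ∫₀ᵀ J (g² + g')`. -/
theorem stmt5 (d T : ℝ) (hd : 0 < d) (hT : 0 < T)
    (J J' g g' : ℝ → ℝ)
    (hJd : ∀ t ∈ Set.Icc (0:ℝ) T, HasDerivAt J (J' t) t)
    (hJ'c : ContinuousOn J' (Set.Icc 0 T))
    (hgd : ∀ t ∈ Set.Icc (0:ℝ) T, HasDerivAt g (g' t) t)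
    (hg'c : ContinuousOn g' (Set.Icc 0 T))
    (hJ : ∀ t ∈ Set.Icc (0:ℝ) T, 0 ≤ J t)
    (hg : ∀ t ∈ Set.Icc (0:ℝ) T, 0 < g t)
    (hineq : ∀ t ∈ Set.Icc (0:ℝ) T,
      (1 / d) * (g t * J t) ^ 2 ≤ (g t) ^ 2 * J t - g t * J' t) :
    (∫ t in (0:ℝ)..T, (g t * J t) ^ 2) ≤
      d * g 0 * J 0 + d * ∫ t in (0:ℝ)..T, J t * ((g t) ^ 2 + g' t) := by
  have huIcc : Set.uIcc (0:ℝ) T = Set.Icc 0 T := Set.uIcc_of_le hT.le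
  have hJc : ContinuousOn J (Set.Icc 0 T) := fun t ht =>
    ((hJd t ht).continuousAt).continuousWithinAt
  have hgc : ContinuousOn g (Set.Icc 0 T) := fun t ht =>
    ((hgd t ht).continuousAt).continuousWithinAt
  have hcont : ContinuousOn (fun t => g' t * J t + g t * J' t) (Set.Icc 0 T) :=
    (hg'c.mul hJc).add (hgc.mul hJ'c)
  have hcont2 : ContinuousOn (fun t => J t * ((g t) ^ 2 + g' t)) (Set.Icc 0 T) :=
    hJc.mul (((hgc.pow 2)).add hg'c)
  have hcontL : ContinuousOn (fun t => (g t * J t) ^ 2) (Set.Icc 0 T) :=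
    (hgc.mul hJc).pow 2
  have hcontR : ContinuousOn (fun t => d * ((g t) ^ 2 * J t - g t * J' t)) (Set.Icc 0 T) :=
    continuousOn_const.mul (((hgc.pow 2).mul hJc).sub (hgc.mul hJ'c))
  have hFTC : ∫ t in (0:ℝ)..T, (g' t * J t + g t * J' t) = g T * J T - g 0 * J 0 := by
    apply intervalIntegral.integral_eq_sub_of_hasDerivAt
    · intro t ht
      rw [huIcc] at ht
      exact (hgd t ht).mul (hJd t ht)
    · exact (by rw [huIcc]; exact hcont : ContinuousOn _ (Set.uIcc 0 T)).intervalIntegrable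
  have hint1 : IntervalIntegrable (fun t => (g t * J t) ^ 2) volume 0 T :=
    (by rw [huIcc]; exact hcontL : ContinuousOn _ (Set.uIcc 0 T)).intervalIntegrable
  have hint2 : IntervalIntegrable (fun t => d * ((g t) ^ 2 * J t - g t * J' t)) volume 0 T :=
    (by rw [huIcc]; exact hcontR : ContinuousOn _ (Set.uIcc 0 T)).intervalIntegrable
  have hint3 : IntervalIntegrable (fun t => J t * ((g t) ^ 2 + g' t)) volume 0 T :=
    (by rw [huIcc]; exact hcont2 : ContinuousOn _ (Set.uIcc 0 T)).intervalIntegrable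
  have hint4 : IntervalIntegrable (fun t => g' t * J t + g t * J' t) volume 0 T :=
    (by rw [huIcc]; exact hcont : ContinuousOn _ (Set.uIcc 0 T)).intervalIntegrable
  have step1 : (∫ t in (0:ℝ)..T, (g t * J t) ^ 2)
      ≤ ∫ t in (0:ℝ)..T, d * ((g t) ^ 2 * J t - g t * J' t) := by
    apply intervalIntegral.integral_mono_on hT.le hint1 hint2
    intro t ht
    have h := mul_le_mul_of_nonneg_left (hineq t ht) hd.le
    rw [show d * (1 / d * (g t * J t) ^ 2) = (g t * J t) ^ 2 from by field_simp] at h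
    exact h
  have step2 : (∫ t in (0:ℝ)..T, d * ((g t) ^ 2 * J t - g t * J' t))
      = d * ((∫ t in (0:ℝ)..T, J t * ((g t) ^ 2 + g' t)) - (g T * J T - g 0 * J 0)) := by
    rw [intervalIntegral.integral_const_mul]
    congr 1
    rw [← hFTC, ← intervalIntegral.integral_sub hint3 hint4]
    apply intervalIntegral.integral_congr
    intro t _
    ring
  have hgT : 0 ≤ g T * J T :=
    mul_nonneg (hg T (Set.right_mem_Icc.mpr hT.le)).le (hJ T (Set.right_mem_Icc.mpr hT.le))
  have hdgT : 0 ≤ d * (g T * J T) := mul_nonneg hd.le hgT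
  calc (∫ t in (0:ℝ)..T, (g t * J t) ^ 2)
      ≤ ∫ t in (0:ℝ)..T, d * ((g t) ^ 2 * J t - g t * J' t) := step1
    _ = d * ((∫ t in (0:ℝ)..T, J t * ((g t) ^ 2 + g' t)) - (g T * J T - g 0 * J 0)) := step2
    _ ≤ d * g 0 * J 0 + d * ∫ t in (0:ℝ)..T, J t * ((g t) ^ 2 + g' t) := by nlinarith
end

section
/- Let d > 0, λ > 0, g₀ > 0, J⋆ > 0, T > 0, and let f : [0,T] → ℝ be continuous and nonnegative. Let J : [0,T] → ℝ be differentiable and strictly positive with J(0) = J⋆ and J′(t) ≤ 2f(t)J(t) − (g₀/d)·exp(−∫₀ᵗ (2f(s) − λ) ds)·J(t)² for all t ∈ [0,T]. Then for all t ∈ [0,T], J(t) ≤ exp(2∫₀ᵗ f(s) ds) / (1/J⋆ + (g₀/(λd))·(e^{λt} − 1)). -/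
open MeasureTheory

/-- Gronwall-type comparison bound for the Fisher information under the approximated
optimal schedule `g°(t) = g₀ exp(-∫₀ᵗ (2f - λ))`: if
`J' t ≤ 2 f t · J t - (g₀/d) exp(-∫₀ᵗ (2f - λ)) (J t)²` with `J(0) = J⋆ > 0`, then
`J t ≤ exp(2∫₀ᵗ f) / (1/J⋆ + (g₀/(λd))(e^{λt} - 1))`. -/
theorem stmt8 (d lam g₀ Jstar T : ℝ) (hd : 0 < d) (hlam : 0 < lam) (hg₀ : 0 < g₀)
    (hJstar : 0 < Jstar) (hT : 0 < T)
    (f : ℝ → ℝ) (hfc : ContinuousOn f (Set.Icc 0 T))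
    (hf0 : ∀ t ∈ Set.Icc (0:ℝ) T, 0 ≤ f t)
    (J J' : ℝ → ℝ)
    (hderiv : ∀ t ∈ Set.Icc (0:ℝ) T, HasDerivAt J (J' t) t)
    (hpos : ∀ t ∈ Set.Icc (0:ℝ) T, 0 < J t)
    (h0 : J 0 = Jstar)
    (hineq : ∀ t ∈ Set.Icc (0:ℝ) T,
      J' t ≤ 2 * f t * J t -
        (g₀ / d) * Real.exp (-∫ s in (0:ℝ)..t, (2 * f s - lam)) * (J t) ^ 2) :
    ∀ t ∈ Set.Icc (0:ℝ) T,
      J t ≤ Real.exp (2 * ∫ s in (0:ℝ)..t, f s) /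
        (1 / Jstar + (g₀ / (lam * d)) * (Real.exp (lam * t) - 1)) := by
  -- continuous extension of f to all of ℝ
  set fe : ℝ → ℝ := fun x => f (min T (max 0 x)) with hfe_def
  have hmaps : ∀ x : ℝ, min T (max 0 x) ∈ Set.Icc (0:ℝ) T := by
    intro x
    constructor
    · exact le_min hT.le (le_max_left 0 x)
    · exact min_le_left _ _
  have hfe_cont : Continuous fe :=
    hfc.comp_continuous (continuous_const.min (continuous_const.max continuous_id)) hmaps
  have hfe_eq : ∀ x ∈ Set.Icc (0:ℝ) T, fe x = f x := by
    intro x hx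
    have : min T (max 0 x) = x := by
      rw [max_eq_right hx.1, min_eq_right hx.2]
    simp [hfe_def, this]
  set Fe : ℝ → ℝ := fun t => ∫ s in (0:ℝ)..t, fe s with hFe_def
  have hFe_deriv : ∀ t : ℝ, HasDerivAt Fe (fe t) t := by
    intro t
    exact intervalIntegral.integral_hasDerivAt_right
      (hfe_cont.intervalIntegrable 0 t)
      hfe_cont.aestronglyMeasurable.stronglyMeasurableAtFilter
      hfe_cont.continuousAt
  have hFeq : ∀ t ∈ Set.Icc (0:ℝ) T, (∫ s in (0:ℝ)..t, f s) = Fe t := by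
    intro t ht
    apply intervalIntegral.integral_congr
    intro x hx
    have hx' : x ∈ Set.Icc (0:ℝ) T := by
      rcases Set.mem_uIcc.mp hx with h | h
      · exact ⟨h.1, h.2.trans ht.2⟩
      · exact ⟨ht.1.trans h.1, h.2.trans hT.le⟩
    exact (hfe_eq x hx').symm
  -- rewrite the integral in hineq
  have hint : ∀ t ∈ Set.Icc (0:ℝ) T,
      (∫ s in (0:ℝ)..t, (2 * f s - lam)) = 2 * Fe t - lam * t := by
    intro t ht
    have hfi : IntervalIntegrable f volume 0 t := by
      apply ContinuousOn.intervalIntegrable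
      apply hfc.mono
      intro x hx
      rcases Set.mem_uIcc.mp hx with h | h
      · exact ⟨h.1, h.2.trans ht.2⟩
      · exact ⟨ht.1.trans h.1, h.2.trans hT.le⟩
    rw [intervalIntegral.integral_sub ((hfi.const_mul 2)) (intervalIntegrable_const),
      intervalIntegral.integral_const_mul, intervalIntegral.integral_const,
      hFeq t ht]
    simp [smul_eq_mul]
    ring
  -- the comparison function
  set H : ℝ → ℝ := fun t =>
    Real.exp (2 * Fe t) / J t - (g₀ / (lam * d)) * Real.exp (lam * t) with hH_def
  have hJcont : ContinuousOn J (Set.Icc 0 T) := fun t ht =>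
    ((hderiv t ht).continuousAt).continuousWithinAt
  have hFecont : Continuous Fe :=
    continuous_iff_continuousAt.mpr fun x => (hFe_deriv x).continuousAt
  have hHcont : ContinuousOn H (Set.Icc 0 T) := by
    apply ContinuousOn.sub
    · exact ((Real.continuous_exp.comp
        (continuous_const.mul hFecont)).continuousOn).div hJcont
        (fun t ht => (hpos t ht).ne')
    · exact (continuous_const.mul (Real.continuous_exp.comp
        (continuous_const.mul continuous_id))).continuousOn
  -- derivative of H at interior points
  have key : ∀ t ∈ Set.Ioo (0:ℝ) T,
      HasDerivAt H
        ((Real.exp (2 * Fe t) * (2 * fe t) * J t - Real.exp (2 * Fe t) * J' t) / (J t) ^ 2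
          - (g₀ / (lam * d)) * (Real.exp (lam * t) * lam)) t := by
    intro t ht
    have ht' : t ∈ Set.Icc (0:ℝ) T := ⟨ht.1.le, ht.2.le⟩
    have h1 : HasDerivAt (fun t => Real.exp (2 * Fe t))
        (Real.exp (2 * Fe t) * (2 * fe t)) t :=
      (((hFe_deriv t).const_mul 2).exp)
    have h2 : HasDerivAt (fun t => Real.exp (2 * Fe t) / J t)
        ((Real.exp (2 * Fe t) * (2 * fe t) * J t - Real.exp (2 * Fe t) * J' t) / (J t) ^ 2) t :=
      h1.div (hderiv t ht') (hpos t ht').ne'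
    have h3 : HasDerivAt (fun t => (g₀ / (lam * d)) * Real.exp (lam * t))
        ((g₀ / (lam * d)) * (Real.exp (lam * t) * lam)) t := by
      have : HasDerivAt (fun t : ℝ => Real.exp (lam * t)) (Real.exp (lam * t) * lam) t := by
        have := (hasDerivAt_id t).const_mul lam
        simpa using this.exp
      exact this.const_mul _
    exact h2.sub h3
  have keynn : ∀ t ∈ Set.Ioo (0:ℝ) T,
      0 ≤ (Real.exp (2 * Fe t) * (2 * fe t) * J t - Real.exp (2 * Fe t) * J' t) / (J t) ^ 2
        - (g₀ / (lam * d)) * (Real.exp (lam * t) * lam) := by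
    intro t ht
    have ht' : t ∈ Set.Icc (0:ℝ) T := ⟨ht.1.le, ht.2.le⟩
    have hJt := hpos t ht'
    have hJt2 : (0:ℝ) < (J t) ^ 2 := by positivity
    have hi := hineq t ht'
    rw [hint t ht'] at hi
    have hfeq := hfe_eq t ht'
    have hE : (0:ℝ) < Real.exp (2 * Fe t) := Real.exp_pos _
    have hexp : Real.exp (-(2 * Fe t - lam * t)) =
        Real.exp (lam * t) / Real.exp (2 * Fe t) := by
      rw [neg_sub, Real.exp_sub]
    rw [hexp] at hi
    have hmain : (g₀ / d) * Real.exp (lam * t) * (J t) ^ 2 / Real.exp (2 * Fe t)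
        ≤ 2 * fe t * J t - J' t := by
      rw [hfeq]
      have h' : (g₀ / d) * (Real.exp (lam * t) / Real.exp (2 * Fe t)) * J t ^ 2
          ≤ 2 * f t * J t - J' t := by linarith
      calc (g₀ / d) * Real.exp (lam * t) * (J t) ^ 2 / Real.exp (2 * Fe t)
          = (g₀ / d) * (Real.exp (lam * t) / Real.exp (2 * Fe t)) * J t ^ 2 := by ring
        _ ≤ _ := h'
    have hrhs : (g₀ / (lam * d)) * (Real.exp (lam * t) * lam) = (g₀ / d) * Real.exp (lam * t) := by
      field_simp
    rw [hrhs, sub_nonneg, le_div_iff₀ hJt2]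
    have hmain' : (g₀ / d) * Real.exp (lam * t) * (J t) ^ 2
        ≤ (2 * fe t * J t - J' t) * Real.exp (2 * Fe t) := (div_le_iff₀ hE).mp hmain
    nlinarith [hmain']
  have hmono : MonotoneOn H (Set.Icc 0 T) := by
    apply monotoneOn_of_deriv_nonneg (convex_Icc 0 T) hHcont
    · intro t ht
      rw [interior_Icc] at ht
      exact ((key t ht).differentiableAt).differentiableWithinAt
    · intro t ht
      rw [interior_Icc] at ht
      rw [(key t ht).deriv]
      exact keynn t ht
  intro t ht
  have h0mem : (0:ℝ) ∈ Set.Icc (0:ℝ) T := ⟨le_refl 0, hT.le⟩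
  have hHle := hmono h0mem ht ht.1
  have hFe0 : Fe 0 = 0 := by simp [hFe_def]
  have hH0 : H 0 = 1 / Jstar - g₀ / (lam * d) := by
    simp [hH_def, hFe0, h0]
  set D : ℝ := 1 / Jstar + (g₀ / (lam * d)) * (Real.exp (lam * t) - 1) with hD_def
  have hDpos : 0 < D := by
    have h1 : (1:ℝ) ≤ Real.exp (lam * t) := by
      rw [← Real.exp_zero]
      exact Real.exp_le_exp.mpr (mul_nonneg hlam.le ht.1)
    simp only [hD_def]
    have h2 : 0 < 1 / Jstar := by positivity
    linarith [mul_nonneg (by positivity : (0:ℝ) ≤ g₀ / (lam * d)) (by linarith : (0:ℝ) ≤ Real.exp (lam * t) - 1)]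
  have hJt := hpos t ht
  have hgoal : D ≤ Real.exp (2 * Fe t) / J t := by
    have : H 0 ≤ H t := hHle
    rw [hH0, hH_def] at this
    simp only [hD_def]
    linarith
  rw [hFeq t ht]
  rw [le_div_iff₀ hJt] at hgoal
  rw [le_div_iff₀ hDpos]
  linarith
end

section
/- For all λ > 0, d > 0, g₀ > 0, J⋆ > 0 and all t ≥ 0, g₀·e^{λt} / (1/J⋆ + (g₀/(λd))·(e^{λt} − 1)) ≤ max{λd, g₀·J⋆}. -/
/-- The product of the approximated optimal schedule with the Fisher information bound
never exceeds `max (λd) (g₀ J⋆)`: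
`g₀ e^{λt} / (1/J⋆ + (g₀/(λd))(e^{λt} - 1)) ≤ max (λd) (g₀ J⋆)` for all `t ≥ 0`. -/
theorem stmt9 (lam d g₀ Jstar t : ℝ) (hlam : 0 < lam) (hd : 0 < d) (hg₀ : 0 < g₀)
    (hJstar : 0 < Jstar) (ht : 0 ≤ t) :
    g₀ * Real.exp (lam * t) /
        (1 / Jstar + (g₀ / (lam * d)) * (Real.exp (lam * t) - 1))
      ≤ max (lam * d) (g₀ * Jstar) := by
  set E := Real.exp (lam * t) with hE
  have hE1 : 1 ≤ E := by
    rw [hE]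
    have : 0 ≤ lam * t := mul_nonneg hlam.le ht
    simpa using Real.one_le_exp this
  have hld : 0 < lam * d := mul_pos hlam hd
  have hden : 0 < 1 / Jstar + (g₀ / (lam * d)) * (E - 1) := by
    have h1 : 0 < 1 / Jstar := by positivity
    have h2 : 0 ≤ (g₀ / (lam * d)) * (E - 1) := by
      apply mul_nonneg (by positivity) (by linarith)
    linarith
  rw [div_le_iff₀ hden]
  set M := max (lam * d) (g₀ * Jstar) with hM
  have h1 : g₀ * Jstar ≤ M := le_max_right _ _
  have h2 : lam * d ≤ M := le_max_left _ _
  have key : M * (1 / Jstar + g₀ / (lam * d) * (E - 1))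
      = M / Jstar + (M / (lam * d)) * g₀ * (E - 1) := by
    field_simp
  rw [key]
  have hA : g₀ ≤ M / Jstar := by
    rw [le_div_iff₀ hJstar]; linarith [h1]
  have hB : g₀ * (E - 1) ≤ (M / (lam * d)) * g₀ * (E - 1) := by
    have : (1 : ℝ) ≤ M / (lam * d) := by
      rw [le_div_iff₀ hld]; linarith
    nlinarith [mul_nonneg (mul_nonneg (sub_nonneg.mpr this) hg₀.le) (sub_nonneg.mpr hE1)]
  nlinarith
end

section
/- Let d ≥ 1 and let p : ℝ^d → (0,∞) be a twice continuously differentiable probability density such that ∫ ‖∇ log p(x)‖² p(x) dx and ∫ ‖∇² log p(x)‖_F² p(x) dx are finite and the integration-by-parts identity ∫ ‖∇ log p(x)‖² p(x) dx = −∫ tr(∇² log p(x)) p(x) dx holds. Then (∫ ‖∇ log p(x)‖² p(x) dx)² ≤ d · ∫ ‖∇² log p(x)‖_F² p(x) dx. -/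
open MeasureTheory

/-- Concavity-of-entropy-power bound: for a smooth positive probability density `p` on
`ℝ^d` with score `s = ∇ log p`, under integrability and the integration-by-parts identity
`∫ ‖s‖² p = -∫ tr(∇s) p`, one has `(∫ ‖s‖² p)² ≤ d ∫ ‖∇s‖_F² p`, where
`‖∇s‖_F² = ∑ᵢ ‖(∇s) eᵢ‖²` is the squared Frobenius norm of the Hessian of `log p`. -/
theorem stmt10 (d : ℕ) (hd : 1 ≤ d)
    (p : EuclideanSpace ℝ (Fin d) → ℝ)
    (hp_pos : ∀ x, 0 < p x)
    (hp_smooth : ContDiff ℝ 2 p)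
    (hp_int : Integrable p)
    (hp_prob : ∫ x, p x = 1)
    (s : EuclideanSpace ℝ (Fin d) → EuclideanSpace ℝ (Fin d))
    (hs : ∀ x, s x = gradient (fun y => Real.log (p y)) x)
    (hint1 : Integrable (fun x => ‖s x‖ ^ 2 * p x))
    (hint2 : Integrable (fun x =>
      (∑ i, ‖fderiv ℝ s x (EuclideanSpace.single i 1)‖ ^ 2) * p x))
    (hibp : ∫ x, ‖s x‖ ^ 2 * p x =
      - ∫ x, (∑ i, (inner ℝ (fderiv ℝ s x (EuclideanSpace.single i 1))
          (EuclideanSpace.single i 1) : ℝ)) * p x) :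
    (∫ x, ‖s x‖ ^ 2 * p x) ^ 2 ≤
      d * ∫ x, (∑ i, ‖fderiv ℝ s x (EuclideanSpace.single i 1)‖ ^ 2) * p x := by
  classical
  -- s is continuously differentiable
  have hlog : ContDiff ℝ 2 (fun y => Real.log (p y)) :=
    hp_smooth.log (fun x => (hp_pos x).ne')
  have hs_eq : s = fun x =>
      (InnerProductSpace.toDual ℝ (EuclideanSpace ℝ (Fin d))).symm
        (fderiv ℝ (fun y => Real.log (p y)) x) := by
    funext x; rw [hs x]; rfl
  have hs_cd : ContDiff ℝ 1 s := by
    rw [hs_eq]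
    exact (InnerProductSpace.toDual ℝ (EuclideanSpace ℝ (Fin d))).symm.contDiff.comp
      (hlog.fderiv_right (by norm_num))
  have hDs_cont : Continuous (fun x => fderiv ℝ s x) :=
    hs_cd.continuous_fderiv (by simp)
  let T : EuclideanSpace ℝ (Fin d) → ℝ := fun x =>
    ∑ i, (inner ℝ (fderiv ℝ s x (EuclideanSpace.single i 1))
      (EuclideanSpace.single i 1) : ℝ)
  let F : EuclideanSpace ℝ (Fin d) → ℝ := fun x =>
    ∑ i, ‖fderiv ℝ s x (EuclideanSpace.single i 1)‖ ^ 2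
  have happ : ∀ i : Fin d, Continuous
      (fun x => fderiv ℝ s x (EuclideanSpace.single i 1)) := by
    intro i
    exact (ContinuousLinearMap.apply ℝ (EuclideanSpace ℝ (Fin d))
      (EuclideanSpace.single i 1)).continuous.comp hDs_cont
  have hT_cont : Continuous T :=
    continuous_finset_sum _ fun i _ => (happ i).inner continuous_const
  have hF_cont : Continuous F :=
    continuous_finset_sum _ fun i _ => ((happ i).norm.pow 2)
  have hF_nonneg : ∀ x, 0 ≤ F x := fun x =>
    Finset.sum_nonneg fun i _ => sq_nonneg _
  -- pointwise Cauchy-Schwarz : T x ^ 2 ≤ d * F x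
  have hpt : ∀ x, T x ^ 2 ≤ d * F x := by
    intro x
    have h0 : T x ^ 2 ≤ ((Finset.univ : Finset (Fin d)).card : ℝ) *
        ∑ i, (inner ℝ (fderiv ℝ s x (EuclideanSpace.single i 1))
          (EuclideanSpace.single i 1) : ℝ) ^ 2 :=
      sq_sum_le_card_mul_sum_sq
    refine h0.trans ?_
    rw [Finset.card_univ, Fintype.card_fin]
    refine mul_le_mul_of_nonneg_left (Finset.sum_le_sum fun i _ => ?_) (by positivity)
    have h1 : ‖(EuclideanSpace.single i (1:ℝ) : EuclideanSpace ℝ (Fin d))‖ = 1 := by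
      simp [EuclideanSpace.norm_single]
    have h2 := abs_real_inner_le_norm (fderiv ℝ s x (EuclideanSpace.single i 1))
      (EuclideanSpace.single i (1:ℝ))
    rw [h1, mul_one] at h2
    calc (inner ℝ (fderiv ℝ s x (EuclideanSpace.single i 1))
        (EuclideanSpace.single i 1) : ℝ) ^ 2
        = |(inner ℝ (fderiv ℝ s x (EuclideanSpace.single i 1))
          (EuclideanSpace.single i 1) : ℝ)| ^ 2 := (sq_abs _).symm
      _ ≤ ‖fderiv ℝ s x (EuclideanSpace.single i 1)‖ ^ 2 :=
          pow_le_pow_left₀ (abs_nonneg _) h2 2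
  -- integrability
  have hFp_int : Integrable (fun x => F x * p x) := hint2
  have hT2p_int : Integrable (fun x => T x ^ 2 * p x) := by
    refine (hFp_int.const_mul d).mono
      (((hT_cont.pow 2).mul hp_smooth.continuous).aestronglyMeasurable) ?_
    filter_upwards with x
    have hp : 0 ≤ p x := (hp_pos x).le
    have hb : T x ^ 2 * p x ≤ d * (F x * p x) := by
      rw [← mul_assoc]; exact mul_le_mul_of_nonneg_right (hpt x) hp
    rw [Real.norm_of_nonneg (mul_nonneg (sq_nonneg _) hp),
      Real.norm_of_nonneg (mul_nonneg (by positivity) (mul_nonneg (hF_nonneg x) hp))]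
    exact hb
  have hTp_int : Integrable (fun x => T x * p x) := by
    refine ((hT2p_int.add hp_int).div_const 2).mono
      ((hT_cont.mul hp_smooth.continuous).aestronglyMeasurable) ?_
    filter_upwards with x
    have hp : 0 ≤ p x := (hp_pos x).le
    have h1 : |T x| ≤ (T x ^ 2 + 1) / 2 := by nlinarith [sq_abs (T x), sq_nonneg (|T x| - 1)]
    have h2 : ‖T x * p x‖ = |T x| * p x := by
      rw [norm_mul, Real.norm_of_nonneg hp, Real.norm_eq_abs]
    have h3 : (0:ℝ) ≤ (T x ^ 2 * p x + p x) / 2 := by positivity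
    rw [h2]
    have h4 : ‖(T x ^ 2 * p x + p x) / 2‖ = (T x ^ 2 * p x + p x) / 2 :=
      Real.norm_of_nonneg h3
    calc |T x| * p x ≤ (T x ^ 2 + 1) / 2 * p x := mul_le_mul_of_nonneg_right h1 hp
      _ = (T x ^ 2 * p x + p x) / 2 := by ring
      _ = ‖((fun x => T x ^ 2 * p x) + p) x / 2‖ := by
          rw [show ((fun x => T x ^ 2 * p x) + p) x = T x ^ 2 * p x + p x from rfl, h4]
  -- variance trick: (∫ T p)² ≤ ∫ T² p (since ∫ p = 1)
  have hvar : 0 ≤ ∫ x, (T x - (∫ y, T y * p y)) ^ 2 * p x :=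
    integral_nonneg fun x => mul_nonneg (sq_nonneg _) (hp_pos x).le
  have hexpand : ∫ x, (T x - (∫ y, T y * p y)) ^ 2 * p x =
      (∫ x, T x ^ 2 * p x) - (∫ y, T y * p y) ^ 2 := by
    have heq : (fun x => (T x - (∫ y, T y * p y)) ^ 2 * p x) =
        fun x => (T x ^ 2 * p x - (2 * (∫ y, T y * p y)) * (T x * p x)) +
          ((∫ y, T y * p y) ^ 2) * p x := by
      funext x; ring
    have hconst1 : Integrable (fun x => (2 * (∫ y, T y * p y)) * (T x * p x)) :=
      hTp_int.const_mul _
    have hconst2 : Integrable (fun x => ((∫ y, T y * p y) ^ 2) * p x) :=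
      hp_int.const_mul _
    have hsub : Integrable
        (fun x => T x ^ 2 * p x - (2 * (∫ y, T y * p y)) * (T x * p x)) :=
      hT2p_int.sub hconst1
    rw [heq, integral_add hsub hconst2, integral_sub hT2p_int hconst1,
      integral_const_mul, integral_const_mul, hp_prob]
    ring
  have hA2 : (∫ y, T y * p y) ^ 2 ≤ ∫ x, T x ^ 2 * p x := by
    rw [hexpand] at hvar; linarith
  have hmain : (∫ x, ‖s x‖ ^ 2 * p x) ^ 2 = (∫ y, T y * p y) ^ 2 := by
    rw [hibp]; ring
  have hlast : ∫ x, T x ^ 2 * p x ≤ d * ∫ x, F x * p x := by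
    rw [← integral_const_mul]
    refine integral_mono hT2p_int (hFp_int.const_mul d) fun x => ?_
    rw [← mul_assoc]
    exact mul_le_mul_of_nonneg_right (hpt x) (hp_pos x).le
  calc (∫ x, ‖s x‖ ^ 2 * p x) ^ 2 = (∫ y, T y * p y) ^ 2 := hmain
    _ ≤ ∫ x, T x ^ 2 * p x := hA2
    _ ≤ d * ∫ x, F x * p x := hlast
end
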